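/- For q = 1, the invariant curve polynomial of Corollary 2.1(i), g(z,y) = y^3 - (9/26)z - (2784/28561)z^5 + (296/2197)z^3 + (6144/371293)z^7 - (4096/4826809)z^9 + (9/26)y - (60/169)z^2 y + (960/2197)z^4 y - (1536/28561)z^6 y - (12/13)z y^2 - (120/169)z^3 y^2, is irreducible over ℚ (does not factor into two nonconstant polynomials in ℚ[z,y]). -/

import Mathlib

open MvPolynomial

noncomputable section

namespace Stmt18

def z : MvPolynomial (Fin 2) ℚ := X 0
def y : MvPolynomial (Fin 2) ℚ := X 1

/-- the invariant curve polynomial of Corollary 2.1(i) at q = 1 -/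
def g : MvPolynomial (Fin 2) ℚ :=
    C ((1 : ℚ)/1) * y^3 +
    C ((-9 : ℚ)/26) * z +
    C ((-2784 : ℚ)/28561) * z^5 +
    C ((296 : ℚ)/2197) * z^3 +
    C ((6144 : ℚ)/371293) * z^7 +
    C ((-4096 : ℚ)/4826809) * z^9 +
    C ((9 : ℚ)/26) * y +
    C ((-60 : ℚ)/169) * z^2 * y +
    C ((960 : ℚ)/2197) * z^4 * y +
    C ((-1536 : ℚ)/28561) * z^6 * y +
    C ((-12 : ℚ)/13) * z * y^2 +
    C ((-120 : ℚ)/169) * z^3 * y^2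

/-- view `MvPolynomial (Fin 2) ℚ` as polynomials in `y` over `ℚ[z]` -/
def e : MvPolynomial (Fin 2) ℚ ≃ₐ[ℚ] Polynomial (MvPolynomial (Fin 1) ℚ) :=
  (renameEquiv ℚ (Equiv.swap 0 1)).trans (finSuccEquiv ℚ 1)

def q2 : MvPolynomial (Fin 1) ℚ :=
  C ((-12 : ℚ)/13) * X 0 + C ((-120 : ℚ)/169) * (X 0)^3

def q1 : MvPolynomial (Fin 1) ℚ :=
  C ((9 : ℚ)/26) + C ((-60 : ℚ)/169) * (X 0)^2 + C ((960 : ℚ)/2197) * (X 0)^4 +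
    C ((-1536 : ℚ)/28561) * (X 0)^6

def q0 : MvPolynomial (Fin 1) ℚ :=
  C ((-9 : ℚ)/26) * X 0 + C ((-2784 : ℚ)/28561) * (X 0)^5 + C ((296 : ℚ)/2197) * (X 0)^3 +
    C ((6144 : ℚ)/371293) * (X 0)^7 + C ((-4096 : ℚ)/4826809) * (X 0)^9

def P : Polynomial (MvPolynomial (Fin 1) ℚ) :=
  Polynomial.X^3 + Polynomial.C q2 * Polynomial.X^2 + Polynomial.C q1 * Polynomial.X +
    Polynomial.C q0

lemma e_X0 : e (X 0) = Polynomial.C (X 0) := by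
  have h : (X ((Equiv.swap (0 : Fin 2) 1) 0) : MvPolynomial (Fin 2) ℚ) = X (Fin.succ 0) := by
    norm_num
  simp only [e, AlgEquiv.trans_apply, renameEquiv_apply, rename_X, h, finSuccEquiv_X_succ]

lemma e_X1 : e (X 1) = Polynomial.X := by
  have h : (X ((Equiv.swap (0 : Fin 2) 1) 1) : MvPolynomial (Fin 2) ℚ) = X 0 := by
    norm_num
  simp only [e, AlgEquiv.trans_apply, renameEquiv_apply, rename_X, h, finSuccEquiv_X_zero]

lemma e_C (r : ℚ) : e (C r) = Polynomial.C (C r) := by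
  simp [e, finSuccEquiv_apply, eval₂Hom_C]

lemma hP : e g = P := by
  simp only [g, z, y, map_add, map_mul, map_pow, e_X0, e_X1, e_C, P, q0, q1, q2,
    Polynomial.C_add, Polynomial.C_mul, Polynomial.C_pow, C_1, Polynomial.C_1, one_div_one,
    map_one, one_mul]
  ring

lemma P_monic : P.Monic := by
  unfold P
  monicity!

lemma P_natDegree : P.natDegree = 3 := by
  unfold P
  compute_degree!

/-- evaluation `z = 13/2` -/
def ε : MvPolynomial (Fin 1) ℚ →+* ℚ := eval (fun _ : Fin 1 => (13/2 : ℚ))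

lemma no_deg_one (a b : Polynomial (MvPolynomial (Fin 1) ℚ)) (hab : P = a * b)
    (ha1 : a.natDegree = 1) (hu : IsUnit a.leadingCoeff) : False := by
  have hla : ε a.leadingCoeff ≠ 0 := (hu.map ε).ne_zero
  have hadeg : (a.map ε).natDegree = 1 := by
    rw [Polynomial.natDegree_map_of_leadingCoeff_ne_zero ε hla, ha1]
  have hne : a.map ε ≠ 0 := fun h => by simp [h] at hadeg
  have hdeg : (a.map ε).degree = 1 := by
    rw [Polynomial.degree_eq_natDegree hne, hadeg]; rfl
  obtain ⟨r, hr⟩ := Polynomial.exists_root_of_degree_eq_one hdeg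
  have hQr : Polynomial.eval r (P.map ε) = 0 := by
    rw [hab, Polynomial.map_mul, Polynomial.eval_mul, hr, zero_mul]
  have hr' : r^3 - 201*r^2 - 85557/26*r - 42241/4 = 0 := by
    have := hQr
    simp only [P, q0, q1, q2, Polynomial.map_add, Polynomial.map_mul, Polynomial.map_pow,
      Polynomial.map_C, Polynomial.map_X, Polynomial.eval_add, Polynomial.eval_mul,
      Polynomial.eval_pow, Polynomial.eval_C, Polynomial.eval_X, ε, map_add, map_mul, map_pow,
      eval_C, eval_X] at this
    norm_num at this
    linear_combination this
  set s : ℚ := 26 * r with hs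
  set pZ : Polynomial ℤ :=
    Polynomial.X^3 + Polynomial.C (-5226) * Polynomial.X^2 + Polynomial.C (-2224482) * Polynomial.X
      + Polynomial.C (-185606954) with hpZ
  have hmonic : pZ.Monic := by unfold pZ; monicity!
  have haev : Polynomial.aeval s pZ = 0 := by
    simp only [hpZ, map_add, map_mul, map_pow, map_neg, map_ofNat, Polynomial.aeval_X,
      Polynomial.aeval_C, algebraMap_int_eq, eq_intCast, Int.cast_neg, Int.cast_ofNat]
    linear_combination (17576 : ℚ) * hr'
  obtain ⟨n, hn, -⟩ := exists_integer_of_is_root_of_monic hmonic haev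
  have hnq : s = (n : ℚ) := by rw [hn]; simp
  have hnz : n^3 - 5226*n^2 - 2224482*n - 185606954 = 0 := by
    have h2 : (n : ℚ)^3 - 5226*(n : ℚ)^2 - 2224482*(n : ℚ) - 185606954 = 0 := by
      rw [← hnq, hs]
      linear_combination (17576 : ℚ) * hr'
    exact_mod_cast h2
  have h5 : ∀ x : ZMod 5, x^3 - 5226*x^2 - 2224482*x - 185606954 ≠ 0 := by decide
  apply h5 (n : ZMod 5)
  have := congrArg (Int.cast : ℤ → ZMod 5) hnz
  push_cast at this
  simpa using this

lemma P_irreducible : Irreducible P := by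
  constructor
  · intro h
    have := Polynomial.natDegree_eq_zero_of_isUnit h
    rw [P_natDegree] at this
    exact three_ne_zero this
  · intro a b hab
    by_contra hcon
    push_neg at hcon
    obtain ⟨hua, hub⟩ := hcon
    have hP0 : P ≠ 0 := P_monic.ne_zero
    have ha0 : a ≠ 0 := by rintro rfl; simp at hab; exact hP0 hab
    have hb0 : b ≠ 0 := by rintro rfl; simp at hab; exact hP0 hab
    have hdeg : a.natDegree + b.natDegree = 3 := by
      rw [← Polynomial.natDegree_mul ha0 hb0, ← hab, P_natDegree]
    have hlc : a.leadingCoeff * b.leadingCoeff = 1 := by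
      rw [← Polynomial.leadingCoeff_mul, ← hab]; exact P_monic
    have hua' : IsUnit a.leadingCoeff := IsUnit.of_mul_eq_one _ hlc
    have hub' : IsUnit b.leadingCoeff := IsUnit.of_mul_eq_one _ (by rw [mul_comm]; exact hlc)
    have hane : a.natDegree ≠ 0 := by
      intro h
      apply hua
      rw [Polynomial.eq_C_of_natDegree_eq_zero h]
      refine Polynomial.isUnit_C.mpr ?_
      have : a.leadingCoeff = a.coeff 0 := by rw [Polynomial.leadingCoeff, h]
      rwa [this] at hua'
    have hbne : b.natDegree ≠ 0 := by
      intro h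
      apply hub
      rw [Polynomial.eq_C_of_natDegree_eq_zero h]
      refine Polynomial.isUnit_C.mpr ?_
      have : b.leadingCoeff = b.coeff 0 := by rw [Polynomial.leadingCoeff, h]
      rwa [this] at hub'
    have : a.natDegree = 1 ∨ b.natDegree = 1 := by omega
    rcases this with h | h
    · exact no_deg_one a b hab h hua'
    · exact no_deg_one b a (hab.trans (mul_comm a b)) h hub'

theorem g_irreducible : Irreducible g := by
  have : Irreducible (e g) := hP ▸ P_irreducible
  exact (MulEquiv.irreducible_iff e).mp this

end Stmt18
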